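/- For the 4×4 matrix A = (1/√3)·[[0,1,-1,1],[1,-1,0,1],[-1,-1,-1,0],[-1,0,1,1]], one has ‖Ax‖_∞ = √3 for every x ∈ {-1,1}⁴, and hence β(A) = √3. -/
import Mathlib

open Matrix Finset

/-- The ±1 vector associated to a Boolean sign pattern. -/
noncomputable def signVec {n : ℕ} (σ : Fin n → Bool) : Fin n → ℝ :=
  fun i => if σ i then 1 else -1

/-- The ℓ^∞ norm (maximum absolute coordinate) of a vector. -/
noncomputable def supNorm {n : ℕ} (v : Fin n → ℝ) : ℝ := ⨆ i, |v i|

/-- β(A) = 2^{-n} Σ_{x ∈ {-1,1}^n} ‖Ax‖_∞. -/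
noncomputable def beta {n : ℕ} (A : Matrix (Fin n) (Fin n) ℝ) : ℝ :=
  (2 ^ n : ℝ)⁻¹ * ∑ σ : Fin n → Bool, supNorm (A.mulVec (signVec σ))

noncomputable def A4 : Matrix (Fin 4) (Fin 4) ℝ :=
  (Real.sqrt 3)⁻¹ • !![0, 1, -1, 1; 1, -1, 0, 1; -1, -1, -1, 0; -1, 0, 1, 1]

lemma supNorm4 (v : Fin 4 → ℝ) : supNorm v = |v 0| ⊔ (|v 1| ⊔ (|v 2| ⊔ |v 3|)) := by
  rw [supNorm, ← Finset.sup'_univ_eq_ciSup]; rfl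

lemma s3pos : (0:ℝ) < Real.sqrt 3 := Real.sqrt_pos.2 (by norm_num)

lemma inv3 : (Real.sqrt 3)⁻¹ * 3 = Real.sqrt 3 := by
  rw [inv_mul_eq_div, eq_comm, eq_div_iff s3pos.ne', Real.mul_self_sqrt (by norm_num)]

lemma inv1 : (Real.sqrt 3)⁻¹ * 1 ≤ Real.sqrt 3 := by
  nlinarith [inv3, s3pos, inv_pos.2 s3pos]

lemma absval (k : ℝ) : |(Real.sqrt 3)⁻¹ * k| = (Real.sqrt 3)⁻¹ * |k| := by
  rw [abs_mul, abs_of_pos (inv_pos.2 s3pos)]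

lemma key (a b c d : ℝ)
    (ha : |a| = (Real.sqrt 3)⁻¹ * 3 ∨ |a| = (Real.sqrt 3)⁻¹ * 1)
    (hb : |b| = (Real.sqrt 3)⁻¹ * 3 ∨ |b| = (Real.sqrt 3)⁻¹ * 1)
    (hc : |c| = (Real.sqrt 3)⁻¹ * 3 ∨ |c| = (Real.sqrt 3)⁻¹ * 1)
    (hd : |d| = (Real.sqrt 3)⁻¹ * 3 ∨ |d| = (Real.sqrt 3)⁻¹ * 1)
    (h3 : |a| = (Real.sqrt 3)⁻¹ * 3 ∨ |b| = (Real.sqrt 3)⁻¹ * 3 ∨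
      |c| = (Real.sqrt 3)⁻¹ * 3 ∨ |d| = (Real.sqrt 3)⁻¹ * 3) :
    |a| ⊔ (|b| ⊔ (|c| ⊔ |d|)) = Real.sqrt 3 := by
  have h1 : ∀ x : ℝ, |x| = (Real.sqrt 3)⁻¹ * 3 ∨ |x| = (Real.sqrt 3)⁻¹ * 1 →
      |x| ≤ Real.sqrt 3 := by
    rintro x (h | h) <;> rw [h]
    · exact inv3.le
    · exact inv1
  apply le_antisymm
  · simp only [sup_le_iff]
    exact ⟨h1 a ha, h1 b hb, h1 c hc, h1 d hd⟩
  · rcases h3 with h | h | h | h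
    · exact le_sup_of_le_left (by rw [h, inv3])
    · exact le_sup_of_le_right (le_sup_of_le_left (by rw [h, inv3]))
    · exact le_sup_of_le_right (le_sup_of_le_right (le_sup_of_le_left (by rw [h, inv3])))
    · exact le_sup_of_le_right (le_sup_of_le_right (le_sup_of_le_right (by rw [h, inv3])))

theorem bad_science_n4 :
    (∀ σ : Fin 4 → Bool, supNorm (A4.mulVec (signVec σ)) = Real.sqrt 3) ∧
    beta A4 = Real.sqrt 3 := by
  have main : ∀ σ : Fin 4 → Bool, supNorm (A4.mulVec (signVec σ)) = Real.sqrt 3 := by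
    intro σ
    set x : Fin 4 → ℝ := signVec σ with hx
    have e0 : A4.mulVec x 0 = (Real.sqrt 3)⁻¹ * (x 1 - x 2 + x 3) := by
      simp [A4, mulVec, dotProduct, Fin.sum_univ_four, Matrix.cons_val_succ]; ring
    have e1 : A4.mulVec x 1 = (Real.sqrt 3)⁻¹ * (x 0 - x 1 + x 3) := by
      simp [A4, mulVec, dotProduct, Fin.sum_univ_four, Matrix.cons_val_succ]; ring
    have e2 : A4.mulVec x 2 = (Real.sqrt 3)⁻¹ * (-x 0 - x 1 - x 2) := by
      simp [A4, mulVec, dotProduct, Fin.sum_univ_four, Matrix.cons_val_succ]; ring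
    have e3 : A4.mulVec x 3 = (Real.sqrt 3)⁻¹ * (-x 0 + x 2 + x 3) := by
      simp [A4, mulVec, dotProduct, Fin.sum_univ_four, Matrix.cons_val_succ]; ring
    rw [supNorm4, e0, e1, e2, e3]
    apply key <;>
    · cases h0 : σ 0 <;> cases h1 : σ 1 <;> cases h2 : σ 2 <;> cases h3 : σ 3 <;>
        simp only [hx, signVec, h0, h1, h2, h3, if_true, if_false, absval] <;>
        norm_num
  refine ⟨main, ?_⟩
  rw [beta, Finset.sum_congr rfl fun σ _ => main σ, Finset.sum_const, Finset.card_univ]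
  simp only [Fintype.card_fun, Fintype.card_bool, Fintype.card_fin]
  norm_num
  ring
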